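/- Let R ⊆ ℚ^n be a semilinear set such that for every v ∈ ℚ^n, if y•v ∈ R for some rational y > 0, then there exists a rational ε > 0 such that y•v ∈ R for all rational y with 0 < y < ε. Then cone(R) is a finite union of sets, each of which is the solution set of a finite conjunction of homogeneous linear inequalities (each of the form c₁x₁+…+cₙxₙ ≥ 0 or c₁x₁+…+cₙxₙ > 0 with rational coefficients). -/

import Mathlib

/-- A linear set in ℚ^n: the solution set of a finite conjunction of linear
inequalities `c₁x₁+…+cₙxₙ ≤ b` or `c₁x₁+…+cₙxₙ < b` with rational coefficients. -/
def IsLinearSetQ (n : ℕ) (S : Set (Fin n → ℚ)) : Prop :=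
  ∃ (m : ℕ) (c : Fin m → Fin n → ℚ) (b : Fin m → ℚ) (strict : Fin m → Bool),
    S = {x | ∀ i, if strict i then (∑ j, c i j * x j) < b i else (∑ j, c i j * x j) ≤ b i}

/-- A semilinear set: a finite union of linear sets. -/
def IsSemilinear (n : ℕ) (S : Set (Fin n → ℚ)) : Prop :=
  ∃ (k : ℕ) (f : Fin k → Set (Fin n → ℚ)), (∀ i, IsLinearSetQ n (f i)) ∧ S = ⋃ i, f i

/-- A homogeneous linear set: the solution set of a finite conjunction of
homogeneous linear inequalities `c₁x₁+…+cₙxₙ ≥ 0` or `c₁x₁+…+cₙxₙ > 0`. -/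
def IsHomLinearSet (n : ℕ) (S : Set (Fin n → ℚ)) : Prop :=
  ∃ (m : ℕ) (c : Fin m → Fin n → ℚ) (strict : Fin m → Bool),
    S = {x | ∀ i, if strict i then (0 : ℚ) < ∑ j, c i j * x j
                  else (0 : ℚ) ≤ ∑ j, c i j * x j}

/-- cone(R) = {λ•x | λ ∈ ℚ, λ > 0, x ∈ R}. -/
def coneOf {n : ℕ} (R : Set (Fin n → ℚ)) : Set (Fin n → ℚ) :=
  {y | ∃ (l : ℚ) (x : Fin n → ℚ), 0 < l ∧ x ∈ R ∧ y = l • x}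



lemma H1 (a b x : ℚ) (hb : 0 < b) : a ≤ b * x ↔ a / b ≤ x := by
  rw [div_le_iff₀ hb, mul_comm]
lemma H2 (a b x : ℚ) (hb : 0 < b) : a < b * x ↔ a / b < x := by
  rw [div_lt_iff₀ hb, mul_comm]
lemma H3 (a b x : ℚ) (hb : b < 0) : a ≤ b * x ↔ x ≤ a / b := by
  rw [le_div_iff_of_neg hb, mul_comm]
lemma H4 (a b x : ℚ) (hb : b < 0) : a < b * x ↔ x < a / b := by
  rw [lt_div_iff_of_neg hb, mul_comm]

lemma Hpair_le (ai aj bi bj : ℚ) (hbi : 0 < bi) (hbj : bj < 0) :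
    ai / bi ≤ aj / bj ↔ 0 ≤ bj * ai - bi * aj := by
  rw [← H1 _ _ _ hbi, mul_div_assoc' bi aj bj, le_div_iff_of_neg hbj]
  constructor <;> intro h <;> nlinarith
lemma Hpair_lt (ai aj bi bj : ℚ) (hbi : 0 < bi) (hbj : bj < 0) :
    ai / bi < aj / bj ↔ 0 < bj * ai - bi * aj := by
  rw [← H2 _ _ _ hbi, mul_div_assoc' bi aj bj, lt_div_iff_of_neg hbj]
  constructor <;> intro h <;> nlinarith

lemma fm_core {m : ℕ} (a b : Fin m → ℚ) (strict : Fin m → Bool) :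
    (∃ l : ℚ, 0 < l ∧ ∀ i, if strict i then a i < b i * l else a i ≤ b i * l)
    ↔ ((∀ i, b i = 0 → (if strict i then a i < 0 else a i ≤ 0)) ∧
       (∀ i, b i < 0 → a i < 0) ∧
       (∀ i j, 0 < b i → b j < 0 →
         if strict i || strict j then 0 < b j * a i - b i * a j
         else 0 ≤ b j * a i - b i * a j)) := by
  constructor
  · rintro ⟨l, hl, hC⟩
    refine ⟨?_, ?_, ?_⟩
    · intro i hbi
      have := hC i
      rwa [hbi, zero_mul] at this
    · intro i hbi
      have := hC i
      have hbl : b i * l < 0 := mul_neg_of_neg_of_pos hbi hl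
      cases hsi : strict i <;> rw [hsi] at this <;>
        simp only [if_true, if_false, Bool.false_eq_true] at this <;> linarith
    · intro i j hbi hbj
      have hi := hC i; have hj := hC j
      cases hsi : strict i <;> cases hsj : strict j <;> rw [hsi] at hi <;> rw [hsj] at hj <;>
        simp only [hsi, hsj, if_true, if_false, Bool.false_eq_true, Bool.true_or,
          Bool.or_true, Bool.false_or, Bool.or_false] at hi hj ⊢ <;>
        nlinarith
  · rintro ⟨h0, hneg, hpair⟩
    classical
    set P : Finset (Fin m) := Finset.univ.filter (fun i => 0 < b i) with hP
    set N : Finset (Fin m) := Finset.univ.filter (fun i => b i < 0) with hN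
    set Lset : Finset ℚ := insert 0 (P.image (fun i => a i / b i)) with hLset
    have hLne : Lset.Nonempty := ⟨0, Finset.mem_insert_self _ _⟩
    set Ls : ℚ := Lset.max' hLne with hLs
    have hLs0 : 0 ≤ Ls := Finset.le_max' _ _ (Finset.mem_insert_self _ _)
    have hLmem : ∀ i ∈ P, a i / b i ≤ Ls := by
      intro i hi
      rw [hLs]
      exact Finset.le_max' _ _ (by rw [hLset]; exact Finset.mem_insert_of_mem (Finset.mem_image_of_mem _ hi))
    have hPmem : ∀ i, 0 < b i → i ∈ P := fun i hi => by simp [hP, hi]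
    have hNmem : ∀ i, b i < 0 → i ∈ N := fun i hi => by simp [hN, hi]
    -- satisfied for a given l when l exceeds all lower bounds etc.
    by_cases hNe : N = ∅
    · -- no upper bounds
      refine ⟨Ls + 1, by linarith, fun i => ?_⟩
      rcases lt_trichotomy (b i) 0 with hb | hb | hb
      · exact absurd (hNmem i hb) (by simp [hNe])
      · have := h0 i hb
        rw [hb, zero_mul]
        exact this
      · have h1 : a i / b i < Ls + 1 := lt_of_le_of_lt (hLmem i (hPmem i hb)) (by linarith)
        have h2 : a i < b i * (Ls + 1) := (H2 _ _ _ hb).2 h1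
        cases strict i <;> simp <;> linarith
    · have hNne : N.Nonempty := Finset.nonempty_iff_ne_empty.2 hNe
      set Uset : Finset ℚ := N.image (fun j => a j / b j) with hUset
      have hUne : Uset.Nonempty := hNne.image _
      set Us : ℚ := Uset.min' hUne with hUs
      have hUmem : ∀ j ∈ N, Us ≤ a j / b j := by
        intro j hj
        rw [hUs]
        exact Finset.min'_le _ _ (by rw [hUset]; exact Finset.mem_image_of_mem _ hj)
      obtain ⟨j0, hj0N, hj0⟩ : ∃ j0 ∈ N, a j0 / b j0 = Us := by
        have h2 : Us ∈ N.image (fun j => a j / b j) := Finset.min'_mem Uset hUne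
        obtain ⟨j0, hj0N, hj0⟩ := Finset.mem_image.1 h2
        exact ⟨j0, hj0N, hj0⟩
      have hj0neg : b j0 < 0 := by
        have := Finset.mem_filter.1 hj0N; exact this.2
      have hUpos : 0 < Us := by
        rw [← hj0]
        have ha := hneg j0 hj0neg
        exact div_pos_of_neg_of_neg ha hj0neg
      -- every lower ≤ Us
      have hLU : Ls ≤ Us := by
        apply Finset.max'_le
        intro q hq
        rw [hLset] at hq
        rcases Finset.mem_insert.1 hq with rfl | hq
        · linarith
        · obtain ⟨i, hiP, rfl⟩ := Finset.mem_image.1 hq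
          have hbi : 0 < b i := (Finset.mem_filter.1 hiP).2
          have hp := hpair i j0 hbi hj0neg
          have : a i / b i ≤ a j0 / b j0 := by
            cases hsi : strict i <;> cases hsj : strict j0 <;>
              simp only [hsi, hsj, Bool.true_or, Bool.or_true, Bool.false_or, Bool.or_false,
                if_true, if_false, Bool.false_eq_true] at hp <;>
              [skip; skip; skip; skip] <;>
              first
                | exact (Hpair_le _ _ _ _ hbi hj0neg).2 hp
                | exact le_of_lt ((Hpair_lt _ _ _ _ hbi hj0neg).2 hp)
          linarith [this, hUmem j0 hj0N, hj0]
      rcases lt_or_eq_of_le hLU with hlt | heq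
      · -- strict gap: midpoint
        refine ⟨(Ls + Us) / 2, by linarith, fun i => ?_⟩
        rcases lt_trichotomy (b i) 0 with hb | hb | hb
        · have h1 : (Ls + Us) / 2 < a i / b i := lt_of_lt_of_le (by linarith) (hUmem i (hNmem i hb))
          have h2 := (H4 _ _ _ hb).2 h1
          cases strict i <;> simp <;> linarith
        · have := h0 i hb
          rw [hb, zero_mul]; exact this
        · have h1 : a i / b i < (Ls + Us) / 2 := lt_of_le_of_lt (hLmem i (hPmem i hb)) (by linarith)
          have h2 := (H2 _ _ _ hb).2 h1
          cases strict i <;> simp <;> linarith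
      · -- Ls = Us : take l = Us
        refine ⟨Us, hUpos, fun i => ?_⟩
        rcases lt_trichotomy (b i) 0 with hb | hb | hb
        · -- upper bound i
          cases hsi : strict i
          · -- nonstrict: need a i ≤ b i * Us i.e. Us ≤ a i / b i
            simp only [if_false, Bool.false_eq_true]
            exact (H3 _ _ _ hb).2 (hUmem i (hNmem i hb))
          · -- strict: need Us < a i / b i i.e. Ls < a i / b i
            simp only [if_true]
            rw [H4 _ _ _ hb, ← heq]
            -- Ls is either 0 or some a i1 / b i1
            have hmax : Ls ∈ insert (0:ℚ) (P.image fun i => a i / b i) :=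
              Finset.max'_mem Lset hLne
            rcases Finset.mem_insert.1 hmax with h00 | hmem
            · rw [h00]
              exact div_pos_of_neg_of_neg (hneg i hb) hb
            · obtain ⟨i1, hi1P, hi1⟩ := Finset.mem_image.1 hmem
              have hbi1 : 0 < b i1 := (Finset.mem_filter.1 hi1P).2
              have hp := hpair i1 i hbi1 hb
              simp only [hsi, Bool.or_true, if_true] at hp
              rw [← hi1]
              exact (Hpair_lt _ _ _ _ hbi1 hb).2 hp
        · have := h0 i hb
          rw [hb, zero_mul]; exact this
        · -- lower bound i
          cases hsi : strict i
          · simp only [if_false, Bool.false_eq_true]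
            rw [H1 _ _ _ hb, ← heq]
            exact hLmem i (hPmem i hb)
          · simp only [if_true]
            rw [H2 _ _ _ hb, ← hj0]
            have hp := hpair i j0 hb hj0neg
            simp only [hsi, Bool.true_or, if_true] at hp
            exact (Hpair_lt _ _ _ _ hb hj0neg).2 hp

lemma isHomLinearSet_of_fintype {n : ℕ} {ι : Type} [Fintype ι]
    (c : ι → Fin n → ℚ) (strict : ι → Bool) :
    IsHomLinearSet n {x | ∀ i, if strict i then (0:ℚ) < ∑ j, c i j * x j
                            else (0:ℚ) ≤ ∑ j, c i j * x j} := by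
  refine ⟨Fintype.card ι, fun p => c ((Fintype.equivFin ι).symm p),
    fun p => strict ((Fintype.equivFin ι).symm p), ?_⟩
  ext x
  simp only [Set.mem_setOf_eq]
  constructor
  · intro hx p; exact hx _
  · intro hx i
    have := hx (Fintype.equivFin ι i)
    simpa using this

lemma cone_linear {n : ℕ} (S : Set (Fin n → ℚ)) (hS : IsLinearSetQ n S) :
    IsHomLinearSet n (coneOf S) := by
  classical
  obtain ⟨m, c, b, strict, rfl⟩ := hS
  set S := {x : Fin n → ℚ | ∀ i, if strict i then (∑ j, c i j * x j) < b i
      else (∑ j, c i j * x j) ≤ b i} with hSdef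
  have hmem : ∀ y, y ∈ coneOf S ↔
      ∃ l : ℚ, 0 < l ∧ ∀ i, if strict i then (∑ j, c i j * y j) < b i * l
        else (∑ j, c i j * y j) ≤ b i * l := by
    intro y
    constructor
    · rintro ⟨l, x, hl, hx, rfl⟩
      refine ⟨l, hl, fun i => ?_⟩
      have hxi := hx i
      have hsum : ∑ j, c i j * (l • x) j = l * ∑ j, c i j * x j := by
        rw [Finset.mul_sum]
        refine Finset.sum_congr rfl fun j _ => ?_
        simp [Pi.smul_apply, smul_eq_mul]; ring
      rw [hsum]
      cases hsi : strict i <;> rw [hsi] at hxi <;>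
        simp only [if_true, if_false, Bool.false_eq_true] at hxi ⊢ <;> nlinarith
    · rintro ⟨l, hl, hC⟩
      refine ⟨l, l⁻¹ • y, hl, fun i => ?_, (smul_inv_smul₀ (ne_of_gt hl) y).symm⟩
      have hCi := hC i
      have hsum : ∑ j, c i j * (l⁻¹ • y) j = l⁻¹ * ∑ j, c i j * y j := by
        rw [Finset.mul_sum]
        refine Finset.sum_congr rfl fun j _ => ?_
        simp [Pi.smul_apply, smul_eq_mul]; ring
      rw [hsum]
      have hli : 0 < l⁻¹ := inv_pos.2 hl
      cases hsi : strict i <;> rw [hsi] at hCi <;>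
        simp only [if_true, if_false, Bool.false_eq_true] at hCi ⊢
      · calc l⁻¹ * ∑ j, c i j * y j ≤ l⁻¹ * (b i * l) := by nlinarith
          _ = b i := by field_simp
      · calc l⁻¹ * ∑ j, c i j * y j < l⁻¹ * (b i * l) := by nlinarith
          _ = b i := by field_simp
  -- Fourier–Motzkin index type
  let coef : Fin m ⊕ (Fin m × Fin m) → Fin n → ℚ := fun p =>
    match p with
    | Sum.inl i => if 0 < b i then (fun _ => 0) else fun t => -(c i t)
    | Sum.inr (i, j) => if 0 < b i ∧ b j < 0 then (fun t => b j * c i t - b i * c j t)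
        else fun _ => 0
  let str : Fin m ⊕ (Fin m × Fin m) → Bool := fun p =>
    match p with
    | Sum.inl i => if 0 < b i then false else if b i < 0 then true else strict i
    | Sum.inr (i, j) => if 0 < b i ∧ b j < 0 then (strict i || strict j) else false
  have key : coneOf S = {y | ∀ p, if str p then (0:ℚ) < ∑ t, coef p t * y t
      else (0:ℚ) ≤ ∑ t, coef p t * y t} := by
    ext y
    rw [Set.mem_setOf_eq, hmem y,
      fm_core (fun i => ∑ j, c i j * y j) b strict]
    have sneg : ∀ i : Fin m, ∑ t, (-(c i t)) * y t = -(∑ t, c i t * y t) := by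
      intro i; rw [← Finset.sum_neg_distrib]
      exact Finset.sum_congr rfl fun t _ => by ring
    have spair : ∀ i j : Fin m, ∑ t, (b j * c i t - b i * c j t) * y t
        = b j * (∑ t, c i t * y t) - b i * (∑ t, c j t * y t) := by
      intro i j
      rw [Finset.mul_sum, Finset.mul_sum, ← Finset.sum_sub_distrib]
      exact Finset.sum_congr rfl fun t _ => by ring
    constructor
    · rintro ⟨h0, hneg, hpair⟩ p
      match p with
      | Sum.inl i =>
        rcases lt_trichotomy (b i) 0 with hb | hb | hb
        · have hnb : ¬ (0 < b i) := by linarith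
          simp only [coef, str, if_neg hnb, if_pos hb, if_true, sneg i]
          have := hneg i hb
          linarith
        · have hnb : ¬ (0 < b i) := by simp [hb]
          have hnb2 : ¬ (b i < 0) := by simp [hb]
          simp only [coef, str, if_neg hnb, if_neg hnb2, sneg i]
          have := h0 i hb
          cases hsi : strict i <;> rw [hsi] at this <;>
            simp only [if_true, if_false, Bool.false_eq_true] at this ⊢ <;> linarith
        · simp only [coef, str, if_pos hb]
          simp
      | Sum.inr (i, j) =>
        by_cases hb : 0 < b i ∧ b j < 0
        · have := hpair i j hb.1 hb.2
          simp only [coef, str, if_pos hb, spair i j]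
          cases hs : (strict i || strict j) <;> rw [hs] at this <;>
            simp only [if_true, if_false, Bool.false_eq_true] at this ⊢ <;> linarith
        · simp only [coef, str, if_neg hb]
          simp
    · intro hB
      refine ⟨?_, ?_, ?_⟩
      · intro i hb
        have hnb : ¬ (0 < b i) := by simp [hb]
        have hnb2 : ¬ (b i < 0) := by simp [hb]
        have := hB (Sum.inl i)
        simp only [coef, str, if_neg hnb, if_neg hnb2, sneg i] at this
        cases hsi : strict i <;> rw [hsi] at this <;>
          simp only [if_true, if_false, Bool.false_eq_true] at this ⊢ <;> linarith
      · intro i hb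
        have hnb : ¬ (0 < b i) := by linarith
        have := hB (Sum.inl i)
        simp only [coef, str, if_neg hnb, if_pos hb, if_true, sneg i] at this
        linarith
      · intro i j hbi hbj
        have hb : 0 < b i ∧ b j < 0 := ⟨hbi, hbj⟩
        have := hB (Sum.inr (i, j))
        simp only [coef, str, if_pos hb, spair i j] at this
        cases hs : (strict i || strict j) <;> rw [hs] at this <;>
          simp only [if_true, if_false, Bool.false_eq_true] at this ⊢ <;> linarith
  rw [key]
  exact isHomLinearSet_of_fintype coef str

/-- Let R ⊆ ℚ^n be semilinear such that whenever y•v ∈ R for some rational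
y > 0, there is ε > 0 with y•v ∈ R for all rational 0 < y < ε.  Then cone(R)
is a finite union of homogeneous linear sets. -/

theorem stmt13 {n : ℕ} (R : Set (Fin n → ℚ)) (hR : IsSemilinear n R)
    (h : ∀ v : Fin n → ℚ, (∃ y : ℚ, 0 < y ∧ y • v ∈ R) →
      ∃ ε : ℚ, 0 < ε ∧ ∀ y : ℚ, 0 < y → y < ε → y • v ∈ R) :
    ∃ (k : ℕ) (f : Fin k → Set (Fin n → ℚ)),
      (∀ i, IsHomLinearSet n (f i)) ∧ coneOf R = ⋃ i, f i := by
  obtain ⟨k, f, hf, rfl⟩ := hR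
  refine ⟨k, fun i => coneOf (f i), fun i => cone_linear (f i) (hf i), ?_⟩
  ext y
  simp only [coneOf, Set.mem_setOf_eq, Set.mem_iUnion]
  constructor
  · rintro ⟨l, x, hl, ⟨i, hi⟩, rfl⟩
    exact ⟨i, l, x, hl, hi, rfl⟩
  · rintro ⟨i, l, x, hl, hx, rfl⟩
    exact ⟨l, x, hl, ⟨i, hx⟩, rfl⟩
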